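/- Let G be a finite simple connected graph and let T be a spanning tree of G of maximum degree k. Suppose the vertices of T can be partitioned into 'good' and 'bad' vertices such that: (1) every vertex of degree k in T is bad; (2) every bad vertex has degree at least k−1 in T; and (3) no edge of G joins two good vertices lying in two different connected components of the forest obtained from T by deleting all bad vertices. Then k ≤ opt(G) + 1, where opt(G) is the minimum possible maximum degree of a spanning tree of G. -/

import Mathlib

open SimpleGraph

/-- `T` is a spanning tree of `G`. -/
def IsSpanningTree {V : Type*} (G T : SimpleGraph V) : Prop :=
  T ≤ G ∧ T.IsTree

/-- The maximum vertex degree of a graph on a finite vertex set. -/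
noncomputable def maxDeg {V : Type*} [Fintype V] (T : SimpleGraph V) : ℕ :=
  Finset.univ.sup fun v => (T.neighborSet v).ncard

/-- The minimum, over all spanning trees `T'` of `G`, of the maximum degree of `T'`. -/
noncomputable def optDeg {V : Type*} [Fintype V] (G : SimpleGraph V) : ℕ :=
  sInf {k | ∃ T : SimpleGraph V, IsSpanningTree G T ∧ maxDeg T = k}

/-- The forest obtained from `T` by deleting the bad vertices (and incident edges):
the subgraph of `T` induced on good vertices. -/
def goodForest {V : Type*} (T : SimpleGraph V) (bad : V → Prop) : SimpleGraph V :=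
  SimpleGraph.fromRel fun u v => T.Adj u v ∧ ¬ bad u ∧ ¬ bad v


lemma reachable_eq_of_isolated {V : Type*} {H : SimpleGraph V} {v u : V}
    (hv : ∀ x, ¬ H.Adj v x) (h : H.Reachable v u) : v = u := by
  obtain ⟨w⟩ := h
  cases w with
  | nil => rfl
  | cons h' _ => exact absurd h' (hv _)

lemma card_cc_bot {V : Type*} [Finite V] :
    Nat.card (SimpleGraph.ConnectedComponent (⊥ : SimpleGraph V)) = Nat.card V := by
  refine (Nat.card_eq_of_bijective (fun v => SimpleGraph.connectedComponentMk ⊥ v) ⟨?_, ?_⟩).symm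
  · intro a b h
    exact (reachable_bot).mp (SimpleGraph.ConnectedComponent.eq.mp h)
  · exact SimpleGraph.ConnectedComponent.ind (fun v => ⟨v, rfl⟩)

lemma acyclic_mono {V : Type*} {H H' : SimpleGraph V} (hle : H' ≤ H) (hac : H.IsAcyclic) :
    H'.IsAcyclic := fun _ c hc => hac (c.mapLe hle) (hc.mapLe hle)

lemma reachable_deleteEdges' {V : Type*} {H : SimpleGraph V} (u v : V) {x y : V}
    (w : H.Walk x y) :
    (H.deleteEdges {s(u,v)}).Reachable x y
    ∨ ((H.deleteEdges {s(u,v)}).Reachable x u ∧ (H.deleteEdges {s(u,v)}).Reachable v y)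
    ∨ ((H.deleteEdges {s(u,v)}).Reachable x v ∧ (H.deleteEdges {s(u,v)}).Reachable u y) := by
  set H' := H.deleteEdges {s(u,v)} with hH'
  induction w with
  | nil => exact Or.inl (Reachable.refl _)
  | @cons a b y hab p ih =>
    by_cases he : s(a,b) = s(u,v)
    · rw [Sym2.eq_iff] at he
      rcases he with ⟨rfl, rfl⟩ | ⟨rfl, rfl⟩
      · rcases ih with h | ⟨h1, h2⟩ | ⟨h1, h2⟩
        · exact Or.inr (Or.inl ⟨Reachable.refl _, h⟩)
        · exact Or.inr (Or.inl ⟨Reachable.refl _, h2⟩)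
        · exact Or.inl h2
      · rcases ih with h | ⟨h1, h2⟩ | ⟨h1, h2⟩
        · exact Or.inr (Or.inr ⟨Reachable.refl _, h⟩)
        · exact Or.inl h2
        · exact Or.inr (Or.inr ⟨Reachable.refl _, h2⟩)
    · have hab' : H'.Adj a b := by
        rw [hH', deleteEdges_adj]
        exact ⟨hab, he⟩
      rcases ih with h | ⟨h1, h2⟩ | ⟨h1, h2⟩
      · exact Or.inl (hab'.reachable.trans h)
      · exact Or.inr (Or.inl ⟨hab'.reachable.trans h1, h2⟩)
      · exact Or.inr (Or.inr ⟨hab'.reachable.trans h1, h2⟩)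

lemma counting_aux {V : Type*} [Finite V] :
    ∀ (n : ℕ) (H : SimpleGraph V), H.edgeSet.ncard = n →
      (Nat.card V ≤ n + Nat.card (SimpleGraph.ConnectedComponent H)) ∧
      (H.IsAcyclic → n + Nat.card (SimpleGraph.ConnectedComponent H) ≤ Nat.card V) := by
  intro n
  induction n with
  | zero =>
    intro H h0
    have hbot : H = ⊥ :=
      edgeSet_eq_empty.mp ((Set.ncard_eq_zero H.edgeSet.toFinite).mp h0)
    subst hbot
    rw [card_cc_bot]
    exact ⟨by omega, fun _ => by omega⟩
  | succ n ih =>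
    intro H hcard
    classical
    -- pick an edge
    have hne : H.edgeSet.Nonempty := by
      rw [Set.nonempty_iff_ne_empty]
      intro h
      rw [h] at hcard
      simp at hcard
    obtain ⟨e, he⟩ := hne
    induction e using Sym2.ind with
    | _ u v =>
    have huv : H.Adj u v := (mem_edgeSet H).mp he
    set H' := H.deleteEdges {s(u,v)} with hH'
    have hle : H' ≤ H := deleteEdges_le _
    have hE' : H'.edgeSet = H.edgeSet \ {s(u,v)} := edgeSet_deleteEdges _
    have hcard' : H'.edgeSet.ncard = n := by
      rw [hE', Set.ncard_diff_singleton_of_mem he, hcard]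
      omega
    have hnadj : ¬ H'.Adj u v := by simp [hH']
    obtain ⟨ihA, ihB⟩ := ih H' hcard'
    set φ : SimpleGraph.ConnectedComponent H' → SimpleGraph.ConnectedComponent H :=
      SimpleGraph.ConnectedComponent.map (SimpleGraph.Hom.ofLE hle) with hφ
    have hφmk : ∀ x : V, φ (SimpleGraph.connectedComponentMk H' x)
        = SimpleGraph.connectedComponentMk H x := fun x => rfl
    have key : ∀ x y : V, H.Reachable x y →
        H'.Reachable x y ∨ (H'.Reachable x u ∧ H'.Reachable v y)
          ∨ (H'.Reachable x v ∧ H'.Reachable u y) := by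
      intro x y hr
      obtain ⟨w⟩ := hr
      exact reachable_deleteEdges' u v w
    have keyc : ∀ c c' : SimpleGraph.ConnectedComponent H', φ c = φ c' →
        c = c' ∨ (c = SimpleGraph.connectedComponentMk H' u
            ∧ c' = SimpleGraph.connectedComponentMk H' v)
          ∨ (c = SimpleGraph.connectedComponentMk H' v
            ∧ c' = SimpleGraph.connectedComponentMk H' u) := by
      refine SimpleGraph.ConnectedComponent.ind₂ ?_
      intro x y h
      rw [hφmk, hφmk] at h
      have hr : H.Reachable x y := SimpleGraph.ConnectedComponent.eq.mp h
      rcases key x y hr with h | ⟨h1, h2⟩ | ⟨h1, h2⟩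
      · exact Or.inl (SimpleGraph.ConnectedComponent.sound h)
      · exact Or.inr (Or.inl ⟨SimpleGraph.ConnectedComponent.sound h1,
          SimpleGraph.ConnectedComponent.sound h2.symm⟩)
      · exact Or.inr (Or.inr ⟨SimpleGraph.ConnectedComponent.sound h1,
          SimpleGraph.ConnectedComponent.sound h2.symm⟩)
    constructor
    · -- card V ≤ (n+1) + card CC H
      -- via: card CC H' ≤ card CC H + 1
      have hinj : Function.Injective (fun c : SimpleGraph.ConnectedComponent H' =>
          if c = SimpleGraph.connectedComponentMk H' v then (Sum.inr () :
            SimpleGraph.ConnectedComponent H ⊕ Unit) else Sum.inl (φ c)) := by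
        intro c c' h
        dsimp only at h
        by_cases h1 : c = SimpleGraph.connectedComponentMk H' v
        · by_cases h2 : c' = SimpleGraph.connectedComponentMk H' v
          · rw [h1, h2]
          · rw [if_pos h1, if_neg h2] at h
            exact absurd h (by simp)
        · by_cases h2 : c' = SimpleGraph.connectedComponentMk H' v
          · rw [if_neg h1, if_pos h2] at h
            exact absurd h (by simp)
          · rw [if_neg h1, if_neg h2] at h
            simp only [Sum.inl.injEq] at h
            rcases keyc c c' h with h | ⟨ha, hb⟩ | ⟨ha, hb⟩
            · exact h
            · exact absurd hb h2
            · exact absurd ha h1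
      have hcc : Nat.card (SimpleGraph.ConnectedComponent H')
          ≤ Nat.card (SimpleGraph.ConnectedComponent H) + 1 := by
        have := Nat.card_le_card_of_injective _ hinj
        simpa [Nat.card_sum] using this
      omega
    · -- acyclic case
      intro hac
      have hac' : H'.IsAcyclic := acyclic_mono hle hac
      have hB := ihB hac'
      have hbr : ¬ H'.Reachable u v :=
        (isBridge_iff.mp (isAcyclic_iff_forall_adj_isBridge.mp hac huv))
      -- injection CC H ⊕ Unit → CC H'
      set c₀ : SimpleGraph.ConnectedComponent H := SimpleGraph.connectedComponentMk H u with hc₀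
      have hout : ∀ c : SimpleGraph.ConnectedComponent H,
          SimpleGraph.connectedComponentMk H c.out = c := fun c => c.out_eq
      have houtr : ∀ c : SimpleGraph.ConnectedComponent H, ∀ x : V,
          SimpleGraph.connectedComponentMk H x = c → H.Reachable c.out x := by
        intro c x hx
        exact SimpleGraph.ConnectedComponent.eq.mp (by rw [hout, hx])
      have hinj2 : Function.Injective
          (fun s : SimpleGraph.ConnectedComponent H ⊕ Unit =>
            match s with
            | Sum.inl c => SimpleGraph.connectedComponentMk H' c.out
            | Sum.inr _ => if H'.Reachable c₀.out u
                then SimpleGraph.connectedComponentMk H' v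
                else SimpleGraph.connectedComponentMk H' u) := by
        have main : ∀ c : SimpleGraph.ConnectedComponent H,
            (SimpleGraph.connectedComponentMk H' c.out =
              (if H'.Reachable c₀.out u
                then SimpleGraph.connectedComponentMk H' v
                else SimpleGraph.connectedComponentMk H' u)) → False := by
          intro c hc
          by_cases hr : H'.Reachable c₀.out u
          · rw [if_pos hr] at hc
            have h1 : H'.Reachable c.out v := SimpleGraph.ConnectedComponent.eq.mp hc
            -- c contains v in H, so c = mk v = mk u = c₀
            have : SimpleGraph.connectedComponentMk H c.out
                = SimpleGraph.connectedComponentMk H v :=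
              SimpleGraph.ConnectedComponent.sound (h1.mono hle)
            have hceq : c = c₀ := by
              rw [← hout c, this, hc₀]
              exact SimpleGraph.ConnectedComponent.sound huv.reachable.symm
            rw [hceq] at h1
            exact hbr (hr.symm.trans h1)
          · rw [if_neg hr] at hc
            have h1 : H'.Reachable c.out u := SimpleGraph.ConnectedComponent.eq.mp hc
            have : SimpleGraph.connectedComponentMk H c.out
                = SimpleGraph.connectedComponentMk H u :=
              SimpleGraph.ConnectedComponent.sound (h1.mono hle)
            have hceq : c = c₀ := by rw [← hout c, this, hc₀]
            rw [hceq] at h1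
            exact hr h1
        intro s s' h
        match s, s' with
        | Sum.inl c, Sum.inl c' =>
          simp only at h
          have : H.Reachable c.out c'.out :=
            (SimpleGraph.ConnectedComponent.eq.mp h).mono hle
          have : SimpleGraph.connectedComponentMk H c.out
              = SimpleGraph.connectedComponentMk H c'.out :=
            SimpleGraph.ConnectedComponent.sound this
          rw [hout, hout] at this
          rw [this]
        | Sum.inl c, Sum.inr _ => exact absurd (by simpa using h) (fun hh => main c hh)
        | Sum.inr _, Sum.inl c => exact absurd (by simpa using h.symm) (fun hh => main c hh)
        | Sum.inr _, Sum.inr _ => rfl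
      have hcc2 : Nat.card (SimpleGraph.ConnectedComponent H) + 1
          ≤ Nat.card (SimpleGraph.ConnectedComponent H') := by
        have := Nat.card_le_card_of_injective _ hinj2
        simpa [Nat.card_sum] using this
      omega

open Classical in
lemma sum_degree_eq_filters {V : Type*} [Fintype V] (H : SimpleGraph V) (B : Finset V) :
    ∑ v ∈ B, H.degree v
      = (H.edgeFinset.filter (fun e => ∃ v ∈ e, v ∈ B)).card
        + (H.edgeFinset.filter (fun e => ∀ v ∈ e, v ∈ B)).card := by
  classical
  have step1 : ∑ v ∈ B, H.degree v = ∑ v ∈ B, (H.edgeFinset.filter (fun e => v ∈ e)).card := by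
    refine Finset.sum_congr rfl fun v _ => ?_
    rw [← card_incidenceFinset_eq_degree, incidenceFinset_eq_filter]
  rw [step1]
  have step2 : ∑ v ∈ B, (H.edgeFinset.filter (fun e => v ∈ e)).card
      = ∑ e ∈ H.edgeFinset, (B.filter (fun v => v ∈ e)).card := by
    simp only [Finset.card_filter]
    exact Finset.sum_comm
  rw [step2]
  have step3 : ∀ e ∈ H.edgeFinset, (B.filter (fun v => v ∈ e)).card
      = (if (∃ v ∈ e, v ∈ B) then 1 else 0) + (if (∀ v ∈ e, v ∈ B) then 1 else 0) := by
    intro e he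
    have hd : ¬ e.IsDiag := not_isDiag_of_mem_edgeSet H (mem_edgeFinset.mp he)
    induction e using Sym2.ind with
    | _ x y =>
    have hxy : x ≠ y := by simpa [Sym2.isDiag_iff_proj_eq] using hd
    have hsplit : B.filter (fun v => v ∈ s(x,y))
        = B.filter (fun v => v = x) ∪ B.filter (fun v => v = y) := by
      ext w
      simp [Sym2.mem_iff, or_and_right]
      tauto
    have hdisj : Disjoint (B.filter (fun v => v = x)) (B.filter (fun v => v = y)) := by
      simp only [Finset.disjoint_left, Finset.mem_filter]
      rintro a ⟨_, rfl⟩ ⟨_, rfl⟩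
      exact hxy rfl
    have cgen : ∀ z : V, (B.filter (fun v => v = z)).card = if z ∈ B then 1 else 0 := by
      intro z
      by_cases h : z ∈ B
      · rw [if_pos h]
        have : B.filter (fun v => v = z) = {z} := by
          ext a
          simp only [Finset.mem_filter, Finset.mem_singleton]
          exact ⟨fun ha => ha.2, fun ha => ⟨ha ▸ h, ha⟩⟩
        rw [this, Finset.card_singleton]
      · rw [if_neg h, Finset.card_eq_zero, Finset.filter_eq_empty_iff]
        rintro a ha rfl
        exact h ha
    have c1 := cgen x
    have c2 := cgen y
    rw [hsplit, Finset.card_union_of_disjoint hdisj, c1, c2]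
    have he1 : (∃ v ∈ s(x,y), v ∈ B) ↔ (x ∈ B ∨ y ∈ B) := by
      simp [Sym2.mem_iff, or_and_right, exists_or]
    have he2 : (∀ v ∈ s(x,y), v ∈ B) ↔ (x ∈ B ∧ y ∈ B) := by
      simp [Sym2.mem_iff]
    rw [if_congr he1 rfl rfl, if_congr he2 rfl rfl]
    by_cases hx : x ∈ B <;> by_cases hy : y ∈ B <;> simp [hx, hy]
  rw [Finset.sum_congr rfl step3, Finset.sum_add_distrib, ← Finset.card_filter, ← Finset.card_filter]

lemma ncard_edgeSet_eq' {V : Type*} [Fintype V] (H : SimpleGraph V) [Fintype H.edgeSet] :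
    H.edgeSet.ncard = H.edgeFinset.card := by
  exact Set.ncard_eq_toFinset_card' _

/-- Theorem 2.2 of Fürer–Raghavachari: if `T` is a spanning tree of `G` of maximum
degree `k` whose vertices can be marked good/bad so that (1) every degree-`k` vertex
is bad, (2) every bad vertex has degree ≥ `k-1` in `T`, and (3) no edge of `G` joins
two good vertices lying in different components of the forest obtained by deleting the
bad vertices, then `k ≤ opt(G) + 1`. -/
theorem FRtree_degree_le_opt_add_one {V : Type*} [Fintype V]
    (G T : SimpleGraph V) (k : ℕ)
    (hG : G.Connected) (hT : IsSpanningTree G T) (hk : maxDeg T = k)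
    (bad : V → Prop)
    (h1 : ∀ v, (T.neighborSet v).ncard = k → bad v)
    (h2 : ∀ v, bad v → k - 1 ≤ (T.neighborSet v).ncard)
    (h3 : ∀ u v, G.Adj u v → ¬ bad u → ¬ bad v → (goodForest T bad).Reachable u v) :
    k ≤ optDeg G + 1 := by
  classical
  by_cases hk2 : k ≤ 1
  · omega
  push_neg at hk2
  obtain ⟨K, rfl⟩ : ∃ K, k = K + 2 := ⟨k - 2, by omega⟩
  haveI hVne : Nonempty V := hG.nonempty
  set n := Fintype.card V with hn
  -- get an optimal spanning tree T'
  have hSne : {m | ∃ T' : SimpleGraph V, IsSpanningTree G T' ∧ maxDeg T' = m}.Nonempty :=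
    ⟨maxDeg T, T, hT, rfl⟩
  obtain ⟨T', hT', hT'deg⟩ := Nat.sInf_mem hSne
  set d := optDeg G with hd
  -- the bad vertex finset
  set Bs : Finset V := Finset.univ.filter bad with hBs
  have hmemBs : ∀ v, v ∈ Bs ↔ bad v := by intro v; simp [hBs]
  -- degrees vs ncard
  have hdeg : ∀ (H : SimpleGraph V) (v : V), (H.neighborSet v).ncard = H.degree v := by
    intro H v
    simp [Set.ncard_eq_toFinset_card', SimpleGraph.degree, neighborFinset]
  -- there is a bad vertex
  obtain ⟨v₀, -, hv₀⟩ :=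
    Finset.exists_mem_eq_sup Finset.univ Finset.univ_nonempty
      (fun v => (T.neighborSet v).ncard)
  have hv₀deg : (T.neighborSet v₀).ncard = K + 2 := by
    rw [← hv₀]; exact hk
  have hbadv₀ : bad v₀ := h1 v₀ hv₀deg
  have hb1 : 1 ≤ Bs.card := Finset.card_pos.mpr ⟨v₀, (hmemBs v₀).mpr hbadv₀⟩
  have hbn : Bs.card ≤ n := by
    rw [hn]; exact Finset.card_le_univ Bs
  -- sum of T-degrees over bad vertices is large
  have hsumT : Bs.card * (K + 1) ≤ ∑ v ∈ Bs, T.degree v := by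
    calc Bs.card * (K + 1) = ∑ _v ∈ Bs, (K + 1) := by
            rw [Finset.sum_const, smul_eq_mul]
      _ ≤ ∑ v ∈ Bs, T.degree v := by
            refine Finset.sum_le_sum fun v hv => ?_
            have := h2 v ((hmemBs v).mp hv)
            rw [hdeg] at this
            omega
  -- sum of T'-degrees over bad vertices is small
  have hsumT' : ∑ v ∈ Bs, T'.degree v ≤ Bs.card * d := by
    calc ∑ v ∈ Bs, T'.degree v ≤ ∑ _v ∈ Bs, d := by
            refine Finset.sum_le_sum fun v hv => ?_
            have hle : (T'.neighborSet v).ncard ≤ maxDeg T' := by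
              unfold maxDeg
              exact Finset.le_sup (f := fun v => (T'.neighborSet v).ncard)
                (Finset.mem_univ v)
            rw [hdeg] at hle
            rw [hT'deg] at hle
            exact hle
      _ = Bs.card * d := by rw [Finset.sum_const, smul_eq_mul]
  -- double counting for T
  have dcT := sum_degree_eq_filters T Bs
  set m := (T.edgeFinset.filter (fun e => ∃ v ∈ e, v ∈ Bs)).card with hm
  set i := (T.edgeFinset.filter (fun e => ∀ v ∈ e, v ∈ Bs)).card with hi
  -- edge count of the tree T
  have hTedge : T.edgeFinset.card + 1 = n := hT.2.card_edgeFinset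
  -- partition of T-edges
  have hpart : m + (T.edgeFinset.filter (fun e => ¬ ∃ v ∈ e, v ∈ Bs)).card
      = T.edgeFinset.card := Finset.card_filter_add_card_filter_not _
  set egf := (T.edgeFinset.filter (fun e => ¬ ∃ v ∈ e, v ∈ Bs)).card with hegf
  -- the good forest's edges
  have hgFedge : (goodForest T bad).edgeFinset
      = T.edgeFinset.filter (fun e => ¬ ∃ v ∈ e, v ∈ Bs) := by
    ext e
    induction e using Sym2.ind with
    | _ x y =>
    rw [mem_edgeFinset]
    simp only [mem_edgeFinset, Finset.mem_filter, mem_edgeSet, goodForest, fromRel_adj]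
    constructor
    · rintro ⟨hne, h | h⟩
      · exact ⟨h.1, by
          intro ⟨v, hv, hvB⟩
          rw [Sym2.mem_iff] at hv
          rcases hv with rfl | rfl
          · exact h.2.1 ((hmemBs _).mp hvB)
          · exact h.2.2 ((hmemBs _).mp hvB)⟩
      · exact ⟨h.1.symm, by
          intro ⟨v, hv, hvB⟩
          rw [Sym2.mem_iff] at hv
          rcases hv with rfl | rfl
          · exact h.2.2 ((hmemBs _).mp hvB)
          · exact h.2.1 ((hmemBs _).mp hvB)⟩
    · rintro ⟨hadj, hng⟩
      push_neg at hng
      refine ⟨hadj.ne, Or.inl ⟨hadj, ?_, ?_⟩⟩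
      · intro hb
        exact (hng x (by simp [Sym2.mem_iff])) ((hmemBs x).mpr hb)
      · intro hb
        exact (hng y (by simp [Sym2.mem_iff])) ((hmemBs y).mpr hb)
  -- apply counting lemma A to the good forest: n ≤ egf + c
  set gF := goodForest T bad with hgF
  set c := Nat.card (SimpleGraph.ConnectedComponent gF) with hc
  have hA := (counting_aux gF.edgeSet.ncard gF rfl).1
  have hgFcard : gF.edgeSet.ncard = egf := by
    rw [ncard_edgeSet_eq', hgF, hgFedge, hegf]
  rw [hgFcard, Nat.card_eq_fintype_card, ← hn, ← hc] at hA
  -- the bad-bad subgraph of T : acyclic, with ≥ n - b + 1 components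
  set TB : SimpleGraph V := SimpleGraph.fromRel (fun u v => T.Adj u v ∧ bad u ∧ bad v) with hTB
  have hTBle : TB ≤ T := by
    intro a b hab
    rw [hTB, fromRel_adj] at hab
    rcases hab.2 with h | h
    · exact h.1
    · exact h.1.symm
  have hTBac : TB.IsAcyclic := acyclic_mono hTBle hT.2.IsAcyclic
  have hTBedge : TB.edgeFinset = T.edgeFinset.filter (fun e => ∀ v ∈ e, v ∈ Bs) := by
    ext e
    induction e using Sym2.ind with
    | _ x y =>
    simp only [mem_edgeFinset, Finset.mem_filter, mem_edgeSet, hTB, fromRel_adj]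
    constructor
    · rintro ⟨hne, h | h⟩
      · refine ⟨h.1, ?_⟩
        intro v hv
        rw [Sym2.mem_iff] at hv
        rcases hv with rfl | rfl
        · exact (hmemBs _).mpr h.2.1
        · exact (hmemBs _).mpr h.2.2
      · refine ⟨h.1.symm, ?_⟩
        intro v hv
        rw [Sym2.mem_iff] at hv
        rcases hv with rfl | rfl
        · exact (hmemBs _).mpr h.2.2
        · exact (hmemBs _).mpr h.2.1
    · rintro ⟨hadj, hall⟩
      refine ⟨hadj.ne, Or.inl ⟨hadj, ?_, ?_⟩⟩
      · exact (hmemBs x).mp (hall x (by simp [Sym2.mem_iff]))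
      · exact (hmemBs y).mp (hall y (by simp [Sym2.mem_iff]))
  have hTBiso : ∀ w : V, ¬ bad w → ∀ x, ¬ TB.Adj w x := by
    intro w hw x hadj
    rw [hTB, fromRel_adj] at hadj
    rcases hadj.2 with h | h
    · exact hw h.2.1
    · exact hw h.2.2
  have hTBccinj : Function.Injective
      (fun s : {v : V // v ∉ Bs} ⊕ Unit =>
        match s with
        | Sum.inl w => SimpleGraph.connectedComponentMk TB w.1
        | Sum.inr _ => SimpleGraph.connectedComponentMk TB v₀) := by
    intro s s' h
    match s, s' with
    | Sum.inl w, Sum.inl w' =>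
      simp only at h
      have hr : TB.Reachable w.1 w'.1 := SimpleGraph.ConnectedComponent.eq.mp h
      have := reachable_eq_of_isolated
        (hTBiso w.1 (fun hb => w.2 ((hmemBs _).mpr hb))) hr
      exact congrArg Sum.inl (Subtype.ext this)
    | Sum.inl w, Sum.inr _ =>
      simp only at h
      have hr : TB.Reachable w.1 v₀ := SimpleGraph.ConnectedComponent.eq.mp h
      have := reachable_eq_of_isolated
        (hTBiso w.1 (fun hb => w.2 ((hmemBs _).mpr hb))) hr
      exact absurd ((hmemBs v₀).mpr hbadv₀) (this ▸ w.2)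
    | Sum.inr _, Sum.inl w =>
      simp only at h
      have hr : TB.Reachable w.1 v₀ := SimpleGraph.ConnectedComponent.eq.mp h.symm
      have := reachable_eq_of_isolated
        (hTBiso w.1 (fun hb => w.2 ((hmemBs _).mpr hb))) hr
      exact absurd ((hmemBs v₀).mpr hbadv₀) (this ▸ w.2)
    | Sum.inr _, Sum.inr _ => rfl
  have hTBcc : (n - Bs.card) + 1 ≤ Nat.card (SimpleGraph.ConnectedComponent TB) := by
    have hcard := Nat.card_le_card_of_injective _ hTBccinj
    have hgood : Nat.card {v : V // v ∉ Bs} = n - Bs.card := by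
      rw [Nat.card_eq_fintype_card, Fintype.card_subtype]
      have : Finset.univ.filter (fun v => v ∉ Bs) = Finset.univ \ Bs := by
        ext v; simp
      rw [this, Finset.card_sdiff_of_subset (Finset.subset_univ Bs), Finset.card_univ]
    rwa [Nat.card_sum, hgood, Nat.card_unique] at hcard
  have hB := (counting_aux TB.edgeSet.ncard TB rfl).2 hTBac
  have hTBcard : TB.edgeSet.ncard = i := by
    rw [ncard_edgeSet_eq', hTBedge, hi]
  rw [hTBcard] at hB
  rw [show Nat.card V = n from Nat.card_eq_fintype_card] at hB
  have hib : i + 1 ≤ Bs.card := by omega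
  -- the quotient graph on components of the good forest
  set π : V → SimpleGraph.ConnectedComponent gF := SimpleGraph.connectedComponentMk gF with hπ
  set HC : SimpleGraph (SimpleGraph.ConnectedComponent gF) :=
    SimpleGraph.fromRel (fun a b => ∃ x y : V, T'.Adj x y ∧ π x = a ∧ π y = b) with hHC
  have hHCconn : HC.Connected := by
    rw [connected_iff]
    constructor
    · intro a b
      have step : ∀ x y : V, HC.Reachable (π x) (π y) := by
        intro x y
        obtain ⟨w⟩ := hT'.2.isConnected.preconnected x y
        induction w with
        | nil => exact Reachable.refl _
        | @cons p q r hpq wlk ih =>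
          refine Reachable.trans ?_ ih
          by_cases hpp : π p = π q
          · rw [hpp]
          · have : HC.Adj (π p) (π q) := by
              rw [hHC, fromRel_adj]
              exact ⟨hpp, Or.inl ⟨p, q, hpq, rfl, rfl⟩⟩
            exact this.reachable
      induction a using SimpleGraph.ConnectedComponent.ind with
      | _ x =>
      induction b using SimpleGraph.ConnectedComponent.ind with
      | _ y =>
      exact step x y
    · exact Nonempty.map π hVne
  have hHCcc : Nat.card (SimpleGraph.ConnectedComponent HC) = 1 := by
    rw [Nat.card_eq_one_iff_unique]
    constructor
    · constructor
      intro a b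
      induction a using SimpleGraph.ConnectedComponent.ind with
      | _ x =>
      induction b using SimpleGraph.ConnectedComponent.ind with
      | _ y =>
      exact SimpleGraph.ConnectedComponent.sound (hHCconn.preconnected x y)
    · exact Nonempty.map (SimpleGraph.connectedComponentMk HC) (Nonempty.map π hVne)
  have hA2 := (counting_aux HC.edgeSet.ncard HC rfl).1
  rw [hHCcc, Nat.card_eq_fintype_card] at hA2
  have hccc : c ≤ HC.edgeSet.ncard + 1 := by
    rw [hc, Nat.card_eq_fintype_card]
    exact hA2
  -- crossing edges of T' have a bad endpoint
  set Xf := T'.edgeFinset.filter (fun e => ∃ v ∈ e, v ∈ Bs) with hXf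
  have hsub : HC.edgeSet ⊆ Sym2.map π '' (↑Xf : Set (Sym2 V)) := by
    intro e he
    induction e using Sym2.ind with
    | _ a b =>
    rw [mem_edgeSet, hHC, fromRel_adj] at he
    obtain ⟨hne, hrel⟩ := he
    have main : ∀ a b : (SimpleGraph.ConnectedComponent gF), a ≠ b →
        (∃ x y : V, T'.Adj x y ∧ π x = a ∧ π y = b) →
        s(a, b) ∈ Sym2.map π '' (↑Xf : Set (Sym2 V)) := by
      rintro a b hne ⟨x, y, hxy, hx, hy⟩
      refine ⟨s(x, y), ?_, ?_⟩
      · rw [Finset.mem_coe, hXf, Finset.mem_filter]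
        refine ⟨mem_edgeFinset.mpr (mem_edgeSet T' |>.mpr hxy), ?_⟩
        by_contra hng
        push_neg at hng
        have hgx : ¬ bad x := fun hb =>
          (hng x (by simp [Sym2.mem_iff])) ((hmemBs x).mpr hb)
        have hgy : ¬ bad y := fun hb =>
          (hng y (by simp [Sym2.mem_iff])) ((hmemBs y).mpr hb)
        have := h3 x y (hT'.1 hxy) hgx hgy
        exact hne (hx ▸ hy ▸ SimpleGraph.ConnectedComponent.sound this)
      · rw [Sym2.map_pair_eq, hx, hy]
    rcases hrel with h | h
    · exact main a b hne h
    · have := main b a (Ne.symm hne) h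
      rwa [Sym2.eq_swap] at this
  have hHCedge : HC.edgeSet.ncard ≤ Xf.card := by
    calc HC.edgeSet.ncard ≤ (Sym2.map π '' (↑Xf : Set (Sym2 V))).ncard :=
          Set.ncard_le_ncard hsub (Set.toFinite _)
      _ ≤ (↑Xf : Set (Sym2 V)).ncard := Set.ncard_image_le (Set.toFinite _)
      _ = Xf.card := Set.ncard_coe_finset _
  -- double counting for T'
  have dcT' := sum_degree_eq_filters T' Bs
  have hXsum : Xf.card ≤ ∑ v ∈ Bs, T'.degree v := by
    rw [dcT', hXf]
    omega
  -- final arithmetic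
  by_contra hcon
  push_neg at hcon
  have hdK : d ≤ K := by omega
  have hbd : Bs.card * d ≤ Bs.card * K := Nat.mul_le_mul_left _ hdK
  have hsumT2 : Bs.card * K + Bs.card ≤ ∑ v ∈ Bs, T.degree v := by
    have : Bs.card * (K + 1) = Bs.card * K + Bs.card := by ring
    omega
  obtain ⟨P, hP⟩ : ∃ P, Bs.card * K = P := ⟨_, rfl⟩
  rw [hP] at hbd hsumT2
  obtain ⟨Q, hQ⟩ : ∃ Q, Bs.card * d = Q := ⟨_, rfl⟩
  rw [hQ] at hbd hsumT'
  clear hP hQ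
  -- chain: Q ≥ sum T' ≥ Xf ≥ e1 ≥ c - 1 ≥ m ≥ P + 1 > P ≥ Q
  omega
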